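/- Single-letter identity for the non-causal family: let (A,S,S_e,U,X,Y) be finite random variables whose joint pmf factorizes as P_A(a)·P_S(s)·1{s_e=h(s,a)}·P_{U|S_e,A}(u|s_e,a)·1{x=f(u,s_e)}·P_{Y|X,S}(y|x,s) for some deterministic map h: 𝒮×𝒜 → 𝒮_e, pmf P_A, conditional pmf P_{U|S_e,A}, function f and channel kernel P_{Y|X,S}. Then I(A,U;Y,S) − I(U;S_e|A) = I(X;Y|S). -/

import Mathlib

/-!
Probing capacity with general encoder actions and non-causal encoding (Theorem 2).
-/

open Finset

/-- Shannon entropy (base 2) of a pmf on a finite type. -/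
noncomputable def ent {α : Type*} [Fintype α] (p : α → ℝ) : ℝ :=
  ∑ a, -(p a * Real.logb 2 (p a))

/-- Mutual information `I(α;β)` (base 2) of the joint pmf `p`. -/
noncomputable def mi {α β : Type*} [Fintype α] [Fintype β] (p : α → β → ℝ) : ℝ :=
  ent (fun a => ∑ b, p a b) + ent (fun b => ∑ a, p a b)
    - ent (fun ab : α × β => p ab.1 ab.2)

/-- Conditional mutual information `I(α;β|γ)` (base 2) of the joint pmf `p`. -/
noncomputable def cmi {α β γ : Type*} [Fintype α] [Fintype β] [Fintype γ]
    (p : α → β → γ → ℝ) : ℝ :=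
  ent (fun ac : α × γ => ∑ b, p ac.1 b ac.2)
  + ent (fun bc : β × γ => ∑ a, p a bc.1 bc.2)
  - ent (fun c : γ => ∑ a, ∑ b, p a b c)
  - ent (fun abc : α × β × γ => p abc.1 abc.2.1 abc.2.2)

/-- `p` is a probability mass function on a finite type. -/
def IsPMF {α : Type*} [Fintype α] (p : α → ℝ) : Prop :=
  (∀ a, 0 ≤ p a) ∧ ∑ a, p a = 1

lemma ent_congr' {α : Type*} [Fintype α] {p q : α → ℝ} (hpq : ∀ a, p a = q a) :
    ent p = ent q := by rw [show p = q from funext hpq]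
lemma ent_equiv {α β : Type*} [Fintype α] [Fintype β] (e : α ≃ β) (q : β → ℝ) :
    ent (fun a => q (e a)) = ent q := by
  unfold ent; exact Fintype.sum_equiv e _ _ (fun a => rfl)
lemma sum_ite_pull {β : Type*} [Fintype β] (C : Prop) [Decidable C] (t : β → ℝ) :
    (∑ b, if C then t b else 0) = if C then ∑ b, t b else 0 := by
  split_ifs <;> simp
lemma ent_eq_sum {ι κ : Type*} [Fintype ι] [Fintype κ] [DecidableEq κ]
    (w : ι → ℝ) (g : ι → κ) (q : κ → ℝ)
    (hq : ∀ k, q k = ∑ i, if g i = k then w i else 0) :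
    ent q = ∑ i, -(w i * Real.logb 2 (q (g i))) := by
  unfold ent
  have h1 : ∀ k, -(q k * Real.logb 2 (q k))
      = ∑ i, (if g i = k then -(w i * Real.logb 2 (q k)) else 0) := by
    intro k
    rw [hq k, Finset.sum_mul, ← Finset.sum_neg_distrib]
    refine Finset.sum_congr rfl fun i _ => ?_
    split_ifs <;> simp
  simp only [h1]
  rw [Finset.sum_comm]
  refine Finset.sum_congr rfl fun i _ => ?_
  simp

lemma sum3_rot {α β γ : Type*} [Fintype α] [Fintype β] [Fintype γ] (F : α → β → γ → ℝ) :
    (∑ a, ∑ b, ∑ c, F a b c) = ∑ b, ∑ c, ∑ a, F a b c := by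
  rw [Finset.sum_comm]
  exact Finset.sum_congr rfl fun _ _ => Finset.sum_comm

lemma sum4_rot {α β γ δ : Type*} [Fintype α] [Fintype β] [Fintype γ] [Fintype δ]
    (F : α → β → γ → δ → ℝ) :
    (∑ a, ∑ b, ∑ c, ∑ d, F a b c d) = ∑ b, ∑ c, ∑ d, ∑ a, F a b c d := by
  rw [Finset.sum_comm]
  exact Finset.sum_congr rfl fun b _ => sum3_rot _


/-- **Single-letter identity for the non-causal family.** If the joint pmf of
`(A,S,S_e,U,X,Y)` factorizes as
`P_A(a) P_S(s) 1{s_e=h(s,a)} P_{U|S_e,A}(u|s_e,a) 1{x=f(u,s_e)} P_{Y|X,S}(y|x,s)`,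
then `I(A,U;Y,S) − I(U;S_e|A) = I(X;Y|S)`. -/
theorem single_letter_identity_noncausal {A S Se U X Y : Type*}
    [Fintype A] [Fintype S] [Fintype Se] [Fintype U] [Fintype X] [Fintype Y]
    [DecidableEq Se] [DecidableEq X]
    (PA : A → ℝ) (PS : S → ℝ) (h : S → A → Se) (PU : Se → A → U → ℝ)
    (f : U → Se → X) (PY : X → S → Y → ℝ)
    (hPA : IsPMF PA) (hPS : IsPMF PS) (hPU : ∀ se a, IsPMF (PU se a))
    (hPY : ∀ x s, IsPMF (PY x s)) :
    mi (fun (au : A × U) (ys : Y × S) =>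
        PA au.1 * PS ys.2 * PU (h ys.2 au.1) au.1 au.2
          * PY (f au.2 (h ys.2 au.1)) ys.2 ys.1)
      - cmi (fun (u : U) (se : Se) (a : A) => ∑ s, ∑ y,
          if h s a = se then PA a * PS s * PU se a u * PY (f u se) s y else 0)
      = cmi (fun (x : X) (y : Y) (s : S) => ∑ a, ∑ u,
          if f u (h s a) = x then PA a * PS s * PU (h s a) a u * PY x s y
          else 0) := by
  classical
  obtain ⟨hPA0, hPA1⟩ := hPA
  obtain ⟨hPS0, hPS1⟩ := hPS
  have hY : ∀ (c : ℝ) (x : X) (s : S), (∑ y, c * PY x s y) = c := fun c x s => by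
    rw [← Finset.mul_sum, (hPY x s).2, mul_one]
  have hU : ∀ (c : ℝ) (se : Se) (a : A), (∑ u, c * PU se a u) = c := fun c se a => by
    rw [← Finset.mul_sum, (hPU se a).2, mul_one]
  have hSsum : ∀ (c : ℝ), (∑ s, c * PS s) = c := fun c => by
    rw [← Finset.mul_sum, hPS1, mul_one]
  have hAsum : ∀ (c : ℝ), (∑ a, PA a * c) = c := fun c => by
    rw [← Finset.sum_mul, hPA1, one_mul]
  -- joint weight on the full space
  set w : A × S × U × Y → ℝ := fun i =>
    PA i.1 * PS i.2.1 * PU (h i.2.1 i.1) i.1 i.2.2.1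
      * PY (f i.2.2.1 (h i.2.1 i.1)) i.2.1 i.2.2.2 with w_def
  set Tm : Se → A → ℝ := fun se a => ∑ s, if h s a = se then PS s else 0 with Tm_def
  set Wf : X → S → ℝ := fun x s =>
    ∑ a, ∑ u, if f u (h s a) = x then PA a * PU (h s a) a u else 0 with Wf_def
  simp only [mi, cmi]
  -- pairwise-cancelling terms
  have e14 : (ent fun a : A × U => ∑ x : Y × S,
        PA a.1 * PS x.2 * PU (h x.2 a.1) a.1 a.2 * PY (f a.2 (h x.2 a.1)) x.2 x.1)
      = ent fun ac : U × A => ∑ x : Se, ∑ s : S, ∑ y : Y,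
        if h s ac.2 = x then PA ac.2 * PS s * PU x ac.2 ac.1 * PY (f ac.1 x) s y else 0 := by
    refine Eq.trans (ent_congr' ?_) (ent_equiv (Equiv.prodComm A U)
      (fun ac : U × A => ∑ x : Se, ∑ s : S, ∑ y : Y,
        if h s ac.2 = x then PA ac.2 * PS s * PU x ac.2 ac.1 * PY (f ac.1 x) s y else 0))
    rintro ⟨a, u⟩
    simp only [Equiv.prodComm_apply, Prod.swap_prod_mk]
    trans (∑ s, ∑ y, PA a * PS s * PU (h s a) a u * PY (f u (h s a)) s y)
    · rw [Fintype.sum_prod_type]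
      exact Finset.sum_comm
    · symm
      rw [sum3_rot]
      show (∑ s : S, ∑ y : Y, ∑ se : Se, if h s a = se then PA a * PS s * PU se a u * PY (f u se) s y else 0) = _
      simp only [Finset.sum_ite_eq, Finset.mem_univ, if_true]
  have e29 : (ent fun b : Y × S => ∑ x : A × U,
        PA x.1 * PS b.2 * PU (h b.2 x.1) x.1 x.2 * PY (f x.2 (h b.2 x.1)) b.2 b.1)
      = ent fun bc : Y × S => ∑ x : X, ∑ a : A, ∑ u : U,
        if f u (h bc.2 a) = x then PA a * PS bc.2 * PU (h bc.2 a) a u * PY x bc.2 bc.1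
        else 0 := by
    refine ent_congr' ?_
    rintro ⟨y0, s0⟩
    rw [Fintype.sum_prod_type]
    symm
    rw [sum3_rot]
    simp only [Finset.sum_ite_eq, Finset.mem_univ, if_true]
  -- expansions over the full space
  have e3 : (ent fun ab : (A × U) × Y × S =>
        PA ab.1.1 * PS ab.2.2 * PU (h ab.2.2 ab.1.1) ab.1.1 ab.1.2
          * PY (f ab.1.2 (h ab.2.2 ab.1.1)) ab.2.2 ab.2.1)
      = ∑ i, -(w i * Real.logb 2 (w i)) := by
    refine (ent_eq_sum w (fun i => ((i.1, i.2.2.1), (i.2.2.2, i.2.1))) _ ?_).trans ?_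
    · rintro ⟨⟨a, u⟩, y, s⟩
      rw [Fintype.sum_eq_single ((a, s, u, y) : A × S × U × Y) ?_]
      · simp [w_def]
      · rintro ⟨a', s', u', y'⟩ hb
        rw [if_neg]
        intro hc
        apply hb
        simp only [Prod.mk.injEq] at hc
        obtain ⟨⟨h1, h2⟩, h3, h4⟩ := hc
        simp [Prod.ext_iff, h1, h2, h3, h4]
    · refine Finset.sum_congr rfl fun i _ => ?_
      simp [w_def]
  have e5 : (ent fun bc : Se × A => ∑ x : U, ∑ s : S, ∑ y : Y,
        if h s bc.2 = bc.1 then PA bc.2 * PS s * PU bc.1 bc.2 x * PY (f x bc.1) s y else 0)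
      = ∑ i, -(w i * Real.logb 2 (PA i.1 * Tm (h i.2.1 i.1) i.1)) := by
    refine (ent_congr' ?_).trans
      (ent_eq_sum w (fun i => (h i.2.1 i.1, i.1)) (fun k => PA k.2 * Tm k.1 k.2) ?_)
    · rintro ⟨se0, a0⟩
      simp only [sum_ite_pull, hY]
      rw [Finset.sum_comm]
      simp only [sum_ite_pull, hU]
      simp only [Tm_def, Finset.mul_sum, mul_ite, mul_zero]
    · rintro ⟨se0, a0⟩
      symm
      simp only [Fintype.sum_prod_type]
      rw [Fintype.sum_eq_single a0 (fun a ha => by simp [Prod.mk.injEq, ha])]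
      simp only [w_def, Prod.mk.injEq, and_true, sum_ite_pull, hY, hU]
      simp only [Tm_def, Finset.mul_sum, mul_ite, mul_zero]
  have e6 : (ent fun c : A => ∑ x : U, ∑ x_1 : Se, ∑ s : S, ∑ y : Y,
        if h s c = x_1 then PA c * PS s * PU x_1 c x * PY (f x x_1) s y else 0)
      = ∑ i, -(w i * Real.logb 2 (PA i.1)) := by
    refine (ent_congr' ?_).trans (ent_eq_sum w (fun i => i.1) PA ?_)
    · intro c
      have step : ∀ u : U, (∑ se, ∑ s, ∑ y,
          if h s c = se then PA c * PS s * PU se c u * PY (f u se) s y else 0)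
          = ∑ s, ∑ y, PA c * PS s * PU (h s c) c u * PY (f u (h s c)) s y := by
        intro u
        rw [sum3_rot]
        simp only [Finset.sum_ite_eq, Finset.mem_univ, if_true]
      rw [Finset.sum_congr rfl fun u _ => step u]
      simp only [hY]
      rw [Finset.sum_comm]
      simp only [hU, hSsum]
    · intro a0
      symm
      simp only [Fintype.sum_prod_type]
      rw [Fintype.sum_eq_single a0 (fun a ha => by simp [ha])]
      simp only [w_def, hY, hU, hSsum, if_true]
  have e7 : (ent fun abc : U × Se × A => ∑ s : S, ∑ y : Y,
        if h s abc.2.2 = abc.2.1 then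
          PA abc.2.2 * PS s * PU abc.2.1 abc.2.2 abc.1 * PY (f abc.1 abc.2.1) s y else 0)
      = ∑ i, -(w i * Real.logb 2
          (PA i.1 * Tm (h i.2.1 i.1) i.1 * PU (h i.2.1 i.1) i.1 i.2.2.1)) := by
    refine (ent_congr' ?_).trans
      (ent_eq_sum w (fun i => (i.2.2.1, h i.2.1 i.1, i.1))
        (fun k => PA k.2.2 * Tm k.2.1 k.2.2 * PU k.2.1 k.2.2 k.1) ?_)
    · rintro ⟨u0, se0, a0⟩
      simp only [sum_ite_pull, hY]
      simp only [Tm_def, Finset.mul_sum, Finset.sum_mul, mul_ite, mul_zero, ite_mul,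
        zero_mul]
    · rintro ⟨u0, se0, a0⟩
      symm
      simp only [Fintype.sum_prod_type]
      rw [Fintype.sum_eq_single a0 (fun a ha => by simp [Prod.mk.injEq, ha])]
      simp only [w_def, Prod.mk.injEq, and_true, sum_ite_pull, hY, ite_and,
        Finset.sum_ite_eq', Finset.mem_univ, if_true]
      refine Eq.trans (Finset.sum_congr rfl fun s _ => ?_)
        (by simp only [Tm_def, Finset.mul_sum, Finset.sum_mul, mul_ite, mul_zero,
          ite_mul, zero_mul] :
          (∑ s, if h s a0 = se0 then PA a0 * PS s * PU se0 a0 u0 else 0)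
            = PA a0 * Tm se0 a0 * PU se0 a0 u0)
      split_ifs with hc
      · rw [hc]
      · rfl
  have e8 : (ent fun ac : X × S => ∑ x : Y, ∑ a : A, ∑ u : U,
        if f u (h ac.2 a) = ac.1 then PA a * PS ac.2 * PU (h ac.2 a) a u * PY ac.1 ac.2 x
        else 0)
      = ∑ i, -(w i * Real.logb 2 (PS i.2.1 * Wf (f i.2.2.1 (h i.2.1 i.1)) i.2.1)) := by
    refine (ent_congr' ?_).trans
      (ent_eq_sum w (fun i => (f i.2.2.1 (h i.2.1 i.1), i.2.1))
        (fun k => PS k.2 * Wf k.1 k.2) ?_)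
    · rintro ⟨x0, s0⟩
      rw [sum3_rot]
      simp only [sum_ite_pull, hY]
      simp only [Wf_def, Finset.mul_sum, mul_ite, mul_zero]
      refine Finset.sum_congr rfl fun a _ => Finset.sum_congr rfl fun u _ => ?_
      split_ifs with hc
      · ring
      · rfl
    · rintro ⟨x0, s0⟩
      symm
      simp only [Fintype.sum_prod_type]
      rw [Finset.sum_comm]
      rw [Fintype.sum_eq_single s0 (fun s hs => by simp [Prod.mk.injEq, hs])]
      simp only [w_def, Prod.mk.injEq, and_true, sum_ite_pull, hY]
      simp only [Wf_def, Finset.mul_sum, mul_ite, mul_zero]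
      refine Finset.sum_congr rfl fun a _ => Finset.sum_congr rfl fun u _ => ?_
      split_ifs with hc
      · ring
      · rfl
  have e10 : (ent fun c : S => ∑ x : X, ∑ x_1 : Y, ∑ a : A, ∑ u : U,
        if f u (h c a) = x then PA a * PS c * PU (h c a) a u * PY x c x_1 else 0)
      = ∑ i, -(w i * Real.logb 2 (PS i.2.1)) := by
    refine (ent_congr' ?_).trans (ent_eq_sum w (fun i => i.2.1) PS ?_)
    · intro s0
      rw [sum4_rot]
      simp only [Finset.sum_ite_eq, Finset.mem_univ, if_true]
      rw [Finset.sum_comm]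
      have step : ∀ a : A, (∑ y, ∑ u,
          PA a * PS s0 * PU (h s0 a) a u * PY (f u (h s0 a)) s0 y)
          = PA a * PS s0 := by
        intro a
        rw [Finset.sum_comm]
        simp only [hY, hU]
      rw [Finset.sum_congr rfl fun a _ => step a]
      exact hAsum _
    · intro s0
      symm
      simp only [Fintype.sum_prod_type]
      rw [Finset.sum_comm]
      rw [Fintype.sum_eq_single s0 (fun s hs => by simp [hs])]
      simp only [w_def, hY, hU, hAsum, if_true]
  have e11 : (ent fun abc : X × Y × S => ∑ a : A, ∑ u : U,
        if f u (h abc.2.2 a) = abc.1 then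
          PA a * PS abc.2.2 * PU (h abc.2.2 a) a u * PY abc.1 abc.2.2 abc.2.1 else 0)
      = ∑ i, -(w i * Real.logb 2 (PS i.2.1 * Wf (f i.2.2.1 (h i.2.1 i.1)) i.2.1
          * PY (f i.2.2.1 (h i.2.1 i.1)) i.2.1 i.2.2.2)) := by
    refine (ent_congr' ?_).trans
      (ent_eq_sum w (fun i => (f i.2.2.1 (h i.2.1 i.1), i.2.2.2, i.2.1))
        (fun k => PS k.2.2 * Wf k.1 k.2.2 * PY k.1 k.2.2 k.2.1) ?_)
    · rintro ⟨x0, y0, s0⟩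
      simp only [Wf_def, Finset.mul_sum, Finset.sum_mul, mul_ite, mul_zero, ite_mul,
        zero_mul]
      refine Finset.sum_congr rfl fun a _ => Finset.sum_congr rfl fun u _ => ?_
      split_ifs with hc
      · ring
      · rfl
    · rintro ⟨x0, y0, s0⟩
      symm
      simp only [Fintype.sum_prod_type]
      rw [Finset.sum_comm]
      rw [Fintype.sum_eq_single s0 (fun s hs => by simp [Prod.mk.injEq, hs])]
      simp only [w_def, Prod.mk.injEq, and_true, ite_and, sum_ite_pull,
        Finset.sum_ite_eq', Finset.mem_univ, if_true]
      refine Eq.trans (Finset.sum_congr rfl fun a _ => Finset.sum_congr rfl fun u _ => ?_)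
        (by
          simp only [Wf_def, Finset.mul_sum, Finset.sum_mul, mul_ite, mul_zero, ite_mul,
            zero_mul]
          refine Finset.sum_congr rfl fun a _ => Finset.sum_congr rfl fun u _ => ?_
          split_ifs with hc
          · ring
          · rfl :
          (∑ a, ∑ u, if f u (h s0 a) = x0 then
              PA a * PS s0 * PU (h s0 a) a u * PY x0 s0 y0 else 0)
            = PS s0 * Wf x0 s0 * PY x0 s0 y0)
      split_ifs with hc
      · rw [hc]
      · rfl
  -- the key pointwise identity, summed
  have hKey : (∑ i, -(w i * Real.logb 2 (PA i.1)))
      + (∑ i, -(w i * Real.logb 2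
          (PA i.1 * Tm (h i.2.1 i.1) i.1 * PU (h i.2.1 i.1) i.1 i.2.2.1)))
      + (∑ i, -(w i * Real.logb 2 (PS i.2.1)))
      + (∑ i, -(w i * Real.logb 2 (PS i.2.1 * Wf (f i.2.2.1 (h i.2.1 i.1)) i.2.1
          * PY (f i.2.2.1 (h i.2.1 i.1)) i.2.1 i.2.2.2)))
      = (∑ i, -(w i * Real.logb 2 (w i)))
      + (∑ i, -(w i * Real.logb 2 (PA i.1 * Tm (h i.2.1 i.1) i.1)))
      + (∑ i, -(w i * Real.logb 2 (PS i.2.1 * Wf (f i.2.2.1 (h i.2.1 i.1)) i.2.1))) := by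
    rw [← Finset.sum_add_distrib, ← Finset.sum_add_distrib, ← Finset.sum_add_distrib,
      ← Finset.sum_add_distrib, ← Finset.sum_add_distrib]
    refine Finset.sum_congr rfl fun i _ => ?_
    obtain ⟨a, s, u, y⟩ := i
    simp only [w_def]
    by_cases h0 : PA a * PS s * PU (h s a) a u * PY (f u (h s a)) s y = 0
    · rw [h0]; ring
    · simp only [mul_ne_zero_iff] at h0
      obtain ⟨⟨⟨hA0, hS0'⟩, hU0⟩, hY0⟩ := h0
      have hTm0 : Tm (h s a) a ≠ 0 := by
        have hle : PS s ≤ Tm (h s a) a := by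
          rw [Tm_def]
          have := Finset.single_le_sum
            (f := fun s' => if h s' a = h s a then PS s' else 0)
            (fun s' _ => by split_ifs; exacts [hPS0 s', le_rfl]) (Finset.mem_univ s)
          simpa using this
        exact ne_of_gt (lt_of_lt_of_le (lt_of_le_of_ne (hPS0 s) (Ne.symm hS0')) hle)
      have hWf0 : Wf (f u (h s a)) s ≠ 0 := by
        have hle1 : PA a * PU (h s a) a u
            ≤ ∑ u', if f u' (h s a) = f u (h s a) then PA a * PU (h s a) a u' else 0 := by
          have := Finset.single_le_sum
            (f := fun u' => if f u' (h s a) = f u (h s a)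
              then PA a * PU (h s a) a u' else 0)
            (fun u' _ => by
              split_ifs
              · exact mul_nonneg (hPA0 a) ((hPU (h s a) a).1 u')
              · exact le_rfl) (Finset.mem_univ u)
          simpa using this
        have hle2 : (∑ u', if f u' (h s a) = f u (h s a)
              then PA a * PU (h s a) a u' else 0) ≤ Wf (f u (h s a)) s := by
          rw [Wf_def]
          exact Finset.single_le_sum
            (f := fun a' => ∑ u', if f u' (h s a') = f u (h s a)
              then PA a' * PU (h s a') a' u' else 0)
            (fun a' _ => Finset.sum_nonneg fun u' _ => by
              split_ifs
              · exact mul_nonneg (hPA0 a') ((hPU (h s a') a').1 u')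
              · exact le_rfl) (Finset.mem_univ a)
        have hpos : 0 < PA a * PU (h s a) a u :=
          mul_pos (lt_of_le_of_ne (hPA0 a) (Ne.symm hA0))
            (lt_of_le_of_ne ((hPU (h s a) a).1 u) (Ne.symm hU0))
        exact ne_of_gt (lt_of_lt_of_le hpos (le_trans hle1 hle2))
      rw [Real.logb_mul (mul_ne_zero (mul_ne_zero hA0 hS0') hU0) hY0,
        Real.logb_mul (mul_ne_zero hA0 hS0') hU0,
        Real.logb_mul hA0 hS0',
        Real.logb_mul (mul_ne_zero hA0 hTm0) hU0,
        Real.logb_mul hA0 hTm0,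
        Real.logb_mul (mul_ne_zero hS0' hWf0) hY0,
        Real.logb_mul hS0' hWf0]
      ring
  rw [e14, e29, e3, e5, e6, e7, e8, e10, e11]
  linarith [hKey]
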